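/- arXiv:0807.4808 — 2 statements merged into one kernel-verified Lean document; each statement's English description precedes it below -/
import Mathlib

section
/- There exists ε > 0 such that for all real X with |X| < ε, F(-1/4, -7/12; 2/3; X) = (1 - 42X - 7X^2)^(1/4) · F(1/4, -1/12; 2/3; -X·(X^2-42X-7)^3 / (7X^2+42X-1)^3). (This is the algebraic hypergeometric transformation induced by the degree 7 Klein pull-back covering Z = -X(X^2-42X-7)^3/(7X^2+42X-1)^3 from local exponent differences (3/2,1/3,1/3) to the standard tetrahedral equation.) -/
open Real

/-- The Gauss hypergeometric series `F(a,b;c;z) = ∑ ((a)_n (b)_n / ((c)_n n!)) z^n`,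
where `(q)_n` is the rising (Pochhammer) factorial. -/
noncomputable def hypgeo (a b c z : ℝ) : ℝ :=
  ∑' n : ℕ, ((∏ i ∈ Finset.range n, (a + i)) * (∏ i ∈ Finset.range n, (b + i)) /
    ((∏ i ∈ Finset.range n, (c + i)) * (Nat.factorial n))) * z ^ n

open Set Filter Topology

noncomputable def psum (d : ℕ → ℝ) (x : ℝ) : ℝ := ∑' n, d n * x ^ n
noncomputable def pder (d : ℕ → ℝ) : ℕ → ℝ := fun n => ((n : ℝ) + 1) * d (n + 1)

/-- master summability: `B * (n+1)^k * r^n` is summable for `|r| < 1`. -/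
lemma summable_master {r : ℝ} (hr : |r| < 1) (B : ℝ) (k : ℕ) :
    Summable (fun n : ℕ => B * ((n : ℝ) + 1) ^ k * r ^ n) := by
  have h1 : Summable (fun n : ℕ => ‖((((n+1)^k : ℕ) : ℝ)) * r ^ n‖) := by
    apply summable_norm_mul_geometric_of_norm_lt_one (k := k) (u := fun n => (n+1)^k)
    · rwa [Real.norm_eq_abs]
    · apply Asymptotics.IsBigO.of_bound (2^k : ℝ)
      filter_upwards [Filter.eventually_ge_atTop 1] with n hn
      have h2 : ((n:ℝ)+1)^k ≤ (2*n : ℝ)^k := by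
        apply pow_le_pow_left₀ (by positivity)
        have : (1:ℝ) ≤ n := by exact_mod_cast hn
        linarith
      simp only [Nat.cast_pow, Real.norm_eq_abs]
      rw [abs_of_nonneg (by positivity), abs_of_nonneg (by positivity)]
      push_cast
      calc ((n:ℝ)+1)^k ≤ (2*n:ℝ)^k := h2
        _ = 2^k * (n:ℝ)^k := by rw [mul_pow]
  apply Summable.of_norm_bounded (h1.mul_left |B|)
  intro n
  apply le_of_eq
  push_cast
  rw [Real.norm_eq_abs, Real.norm_eq_abs, abs_mul, abs_mul, abs_mul]
  rw [abs_of_nonneg (show (0:ℝ) ≤ ((n:ℝ)+1)^k by positivity)]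
  ring

lemma summable_aux {x : ℝ} (hx : |x| < 1) {c : ℕ → ℝ} {B : ℝ} {k : ℕ}
    (hc : ∀ n, |c n| ≤ B * ((n : ℝ) + 1) ^ k) :
    Summable (fun n => c n * x ^ n) := by
  have hx' : |(|x|)| < 1 := by rwa [abs_abs]
  apply Summable.of_norm_bounded (summable_master hx' B k)
  intro n
  rw [Real.norm_eq_abs, abs_mul, abs_pow]
  calc |c n| * |x| ^ n ≤ (B * ((n:ℝ)+1)^k) * |x| ^ n := by
        apply mul_le_mul_of_nonneg_right (hc n) (by positivity)
    _ = B * ((n:ℝ)+1)^k * |x|^n := by ring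

lemma pder_bound {c : ℕ → ℝ} {B : ℝ} {k : ℕ} (hc : ∀ n, |c n| ≤ B * ((n:ℝ)+1)^k) :
    ∀ n, |pder c n| ≤ (2^k * B) * ((n:ℝ)+1)^(k+1) := by
  intro n
  have hB : 0 ≤ B := by have := hc 0; simp at this; exact le_trans (abs_nonneg _) this
  have h1 : |pder c n| = ((n:ℝ)+1) * |c (n+1)| := by
    rw [pder, abs_mul, abs_of_nonneg (by positivity : (0:ℝ) ≤ (n:ℝ)+1)]
  rw [h1]
  have h2 : |c (n+1)| ≤ B * ((n:ℝ)+2)^k := by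
    have := hc (n+1); push_cast at this; convert this using 3 <;> ring
  have h3 : ((n:ℝ)+2)^k ≤ 2^k * ((n:ℝ)+1)^k := by
    rw [← mul_pow]
    apply pow_le_pow_left₀ (by positivity)
    linarith
  calc ((n:ℝ)+1) * |c (n+1)| ≤ ((n:ℝ)+1) * (B * ((n:ℝ)+2)^k) :=
        mul_le_mul_of_nonneg_left h2 (by positivity)
    _ ≤ ((n:ℝ)+1) * (B * (2^k * ((n:ℝ)+1)^k)) := by
        apply mul_le_mul_of_nonneg_left _ (by positivity)
        exact mul_le_mul_of_nonneg_left h3 hB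
    _ = (2^k * B) * ((n:ℝ)+1)^(k+1) := by ring

lemma hasDerivAt_psum {c : ℕ → ℝ} {B : ℝ} {k : ℕ} (hc : ∀ n, |c n| ≤ B * ((n:ℝ)+1)^k)
    {x : ℝ} (hx : |x| < 1) : HasDerivAt (psum c) (psum (pder c) x) x := by
  have hB : 0 ≤ B := by have := hc 0; simp at this; exact le_trans (abs_nonneg _) this
  set r : ℝ := (1 + |x|) / 2 with hr
  have hr0 : 0 < r := by positivity
  have hr1 : |r| < 1 := by rw [abs_of_pos hr0]; simp only [hr]; linarith [abs_nonneg x, hx]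
  have hxr : |x| < r := by simp only [hr]; linarith
  -- the uniform bound
  set u : ℕ → ℝ := fun n => (B/r) * ((n:ℝ)+1)^(k+1) * r^n with hu
  have hsu : Summable u := summable_master hr1 (B/r) (k+1)
  have hbound : ∀ n : ℕ, ∀ y : ℝ, |y| < r → |c n * ((n:ℝ) * y^(n-1))| ≤ u n := by
    intro n y hy
    match n with
    | 0 => simp [hu]; positivity
    | (m+1) =>
      have h1 : |c (m+1) * (((m:ℝ)+1) * y^m)| ≤ (B * ((m:ℝ)+2)^k) * (((m:ℝ)+1) * r^m) := by
        rw [abs_mul, abs_mul, abs_pow]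
        apply mul_le_mul
        · have := hc (m+1)
          have e : (((m+1:ℕ):ℝ)+1) = (m:ℝ)+2 := by push_cast; ring
          rw [e] at this; exact this
        · rw [abs_of_nonneg (by positivity : (0:ℝ) ≤ (m:ℝ)+1)]
          apply mul_le_mul_of_nonneg_left _ (by positivity)
          exact pow_le_pow_left₀ (abs_nonneg _) (le_of_lt hy) m
        · positivity
        · positivity
      have h2 : (B * ((m:ℝ)+2)^k) * (((m:ℝ)+1) * r^m) ≤ u (m+1) := by
        simp only [hu]
        push_cast
        have : (B/r) * ((m:ℝ)+1+1)^(k+1) * r^(m+1) = B * (((m:ℝ)+2)^(k+1)) * r^m := by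
          field_simp; ring
        rw [this]
        have h3 : ((m:ℝ)+2)^(k+1) = ((m:ℝ)+2)^k * ((m:ℝ)+2) := by ring
        rw [h3]
        calc B * ((m:ℝ)+2)^k * (((m:ℝ)+1) * r^m)
            ≤ B * ((m:ℝ)+2)^k * (((m:ℝ)+2) * r^m) := by
              apply mul_le_mul_of_nonneg_left _ (by positivity)
              apply mul_le_mul_of_nonneg_right (by linarith) (by positivity)
          _ = B * (((m:ℝ)+2)^k * ((m:ℝ)+2)) * r^m := by ring
      calc |c (m+1) * ((((m+1):ℕ):ℝ) * y^((m+1)-1))| = |c (m+1) * (((m:ℝ)+1) * y^m)| := by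
            push_cast; norm_num
        _ ≤ (B * ((m:ℝ)+2)^k) * (((m:ℝ)+1) * r^m) := h1
        _ ≤ u (m+1) := h2
  have hD : HasDerivAt (fun z => ∑' n, c n * z^n) (∑' n, c n * ((n:ℝ) * x^(n-1))) x := by
    apply hasDerivAt_tsum_of_isPreconnected hsu (Metric.isOpen_ball : IsOpen (Metric.ball (0:ℝ) r))
      ((convex_ball (0:ℝ) r).isPreconnected)
      (g := fun (n:ℕ) (z:ℝ) => c n * z^n) (g' := fun (n:ℕ) (z:ℝ) => c n * ((n:ℝ) * z^(n-1)))
      (y₀ := x) (y := x)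
    · intro n y _
      exact (hasDerivAt_pow n y).const_mul (c n)
    · intro n y hy
      rw [Real.norm_eq_abs]
      exact hbound n y (by simpa [Real.dist_eq] using hy)
    · simpa [Real.dist_eq] using hxr
    · exact summable_aux hx hc
    · simpa [Real.dist_eq] using hxr
  have hsum2 : Summable (fun n => c n * ((n:ℝ) * x^(n-1))) := by
    apply Summable.of_norm_bounded hsu
    intro n; exact hbound n x hxr
  have heq : (∑' n, c n * ((n:ℝ) * x^(n-1))) = psum (pder c) x := by
    rw [Summable.tsum_eq_zero_add hsum2]
    simp only [Nat.cast_zero, zero_mul, mul_zero, zero_add]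
    rw [psum]
    apply tsum_congr
    intro n
    rw [pder]
    push_cast
    norm_num
    ring
  rw [← heq]
  exact hD

noncomputable def hcoef (a b c : ℝ) (n : ℕ) : ℝ :=
  (∏ i ∈ Finset.range n, (a + i)) * (∏ i ∈ Finset.range n, (b + i)) /
    ((∏ i ∈ Finset.range n, (c + i)) * (Nat.factorial n))

lemma tsum_shift {x : ℝ} {f : ℕ → ℝ} (h0 : f 0 = 0) (hs : Summable (fun n => f n * x^n)) :
    ∑' n, f n * x^n = x * ∑' n, f (n+1) * x^n := by
  rw [Summable.tsum_eq_zero_add hs, h0, ← tsum_mul_left]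
  simp only [zero_mul, zero_add]
  exact tsum_congr fun n => by ring

lemma hcoef_zero (a b c : ℝ) : hcoef a b c 0 = 1 := by simp [hcoef]

lemma hcoef_rec (a b c : ℝ) (hc : ∀ i : ℕ, c + i ≠ 0) (n : ℕ) :
    ((n:ℝ)+1) * ((n:ℝ)+c) * hcoef a b c (n+1) = ((n:ℝ)+a) * ((n:ℝ)+b) * hcoef a b c n := by
  have hprod : (∏ i ∈ Finset.range n, (c + (i:ℝ))) ≠ 0 :=
    Finset.prod_ne_zero_iff.mpr (fun i _ => hc i)
  have hfact : ((Nat.factorial n : ℝ)) ≠ 0 := by positivity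
  have h1 : c + (n:ℝ) ≠ 0 := hc n
  have h2 : ((n:ℝ)+1) ≠ 0 := by positivity
  simp only [hcoef, Finset.prod_range_succ, Nat.factorial_succ]
  push_cast
  field_simp
  ring

/-- The hypergeometric ODE for `psum (hcoef a b c)` on `|x| < 1`. -/
lemma hcoef_ode (a b c : ℝ) (hc : ∀ i : ℕ, c + i ≠ 0)
    (hb : ∀ n, |hcoef a b c n| ≤ 1) {x : ℝ} (hx : |x| < 1) :
    x * (1 - x) * psum (pder (pder (hcoef a b c))) x
      + (c - (a+b+1)*x) * psum (pder (hcoef a b c)) x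
      - a*b * psum (hcoef a b c) x = 0 := by
  set u := hcoef a b c with hu
  have hS : ∀ (e : ℕ → ℝ), (∀ n, |e n| ≤ 2 * ((n:ℝ)+1)^3) → Summable (fun n => e n * x^n) :=
    fun e he => summable_aux (B:=2) (k:=3) hx (fun n => by simpa using he n)
  have hpder : ∀ n, pder u n = ((n:ℝ)+1) * u (n+1) := fun n => rfl
  have hpder2 : ∀ n, pder (pder u) n = ((n:ℝ)+1) * ((n:ℝ)+2) * u (n+2) := by
    intro n; simp only [pder]; push_cast; ring
  have hb1 : ∀ n : ℕ, |u n| ≤ 1 := hb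
  have hgen : ∀ (n m : ℕ) (q : ℝ), |q| ≤ 2*((n:ℝ)+1)^3 → |q * u m| ≤ 2*((n:ℝ)+1)^3 := by
    intro n m q hq
    rw [abs_mul]
    calc |q| * |u m| ≤ |q| * 1 := mul_le_mul_of_nonneg_left (hb1 m) (abs_nonneg q)
      _ ≤ 2*((n:ℝ)+1)^3 := by linarith
  have tcube : ∀ n : ℕ, (0:ℝ) ≤ (n:ℝ) ∧ (0:ℝ) ≤ (n:ℝ)*(n:ℝ) ∧ (0:ℝ) ≤ (n:ℝ)*(n:ℝ)*(n:ℝ) := by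
    intro n
    have t0 : (0:ℝ) ≤ (n:ℝ) := Nat.cast_nonneg n
    exact ⟨t0, mul_nonneg t0 t0, mul_nonneg (mul_nonneg t0 t0) t0⟩
  -- summability facts
  have hSu : Summable (fun n => u n * x^n) := by
    apply hS; intro n
    rw [show u n = 1 * u n from (one_mul _).symm]
    apply hgen; obtain ⟨t0, t1, t2⟩ := tcube n
    rw [abs_one]; nlinarith
  have hS1 : Summable (fun n => pder u n * x^n) := by
    apply hS; intro n; rw [hpder]
    apply hgen; obtain ⟨t0, t1, t2⟩ := tcube n
    rw [abs_of_nonneg (by linarith : (0:ℝ) ≤ (n:ℝ)+1)]; nlinarith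
  have hS2 : Summable (fun n => pder (pder u) n * x^n) := by
    apply hS; intro n; rw [hpder2]
    apply hgen; obtain ⟨t0, t1, t2⟩ := tcube n
    rw [abs_of_nonneg (by nlinarith : (0:ℝ) ≤ ((n:ℝ)+1)*((n:ℝ)+2))]; nlinarith
  have hSq2 : Summable (fun n : ℕ => ((n:ℝ) * ((n:ℝ)+1) * u (n+1)) * x^n) := by
    apply hS; intro n
    apply hgen; obtain ⟨t0, t1, t2⟩ := tcube n
    rw [abs_of_nonneg (by nlinarith : (0:ℝ) ≤ (n:ℝ)*((n:ℝ)+1))]; nlinarith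
  have hsB : Summable (fun n : ℕ => ((n:ℝ) * u n) * x^n) := by
    apply hS; intro n
    apply hgen; obtain ⟨t0, t1, t2⟩ := tcube n
    rw [abs_of_nonneg t0]; nlinarith
  have hsA : Summable (fun n : ℕ => ((n:ℝ) * ((n:ℝ)-1) * u n) * x^n) := by
    apply hS; intro n
    apply hgen; obtain ⟨t0, t1, t2⟩ := tcube n
    rw [abs_le]; constructor <;> nlinarith
  -- the shifted-sum facts
  have hshift2 : (∑' n : ℕ, ((n:ℝ) * ((n:ℝ)+1) * u (n+1)) * x^n) = x * psum (pder (pder u)) x := by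
    rw [tsum_shift (by norm_num) hSq2, psum]
    congr 1
    apply tsum_congr; intro n
    rw [hpder2]; push_cast; ring
  have hshift1 : (∑' n : ℕ, ((n:ℝ) * u n) * x^n) = x * psum (pder u) x := by
    rw [tsum_shift (by norm_num) hsB, psum]
    congr 1
    apply tsum_congr; intro n
    rw [hpder]; push_cast; ring
  have hshift0 : (∑' n : ℕ, ((n:ℝ) * ((n:ℝ)-1) * u n) * x^n)
      = x * (∑' n : ℕ, ((n:ℝ) * ((n:ℝ)+1) * u (n+1)) * x^n) := by
    rw [tsum_shift (by norm_num) hsA]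
    congr 1
    apply tsum_congr; intro n
    push_cast; ring
  -- S1 = S2 termwise by the recurrence
  have hstep : (∑' n : ℕ, (((n:ℝ)+1) * ((n:ℝ)+c) * u (n+1)) * x^n)
      = ∑' n : ℕ, (((n:ℝ)+a) * ((n:ℝ)+b) * u n) * x^n := by
    apply tsum_congr; intro n
    rw [hcoef_rec a b c hc n]
  -- expand S1
  have key1 : (∑' n : ℕ, (((n:ℝ)+1) * ((n:ℝ)+c) * u (n+1)) * x^n)
      = c * psum (pder u) x + x * psum (pder (pder u)) x := by
    have e1 : ∀ n : ℕ, (((n:ℝ)+1) * ((n:ℝ)+c) * u (n+1)) * x^n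
        = c * (pder u n * x^n) + ((n:ℝ) * ((n:ℝ)+1) * u (n+1)) * x^n := by
      intro n; rw [hpder]; ring
    rw [tsum_congr e1, Summable.tsum_add (hS1.mul_left c) hSq2, tsum_mul_left, hshift2]; rfl
  -- expand S2
  have key2 : (∑' n : ℕ, (((n:ℝ)+a) * ((n:ℝ)+b) * u n) * x^n)
      = x * (x * psum (pder (pder u)) x) + (a+b+1) * (x * psum (pder u) x)
        + a * b * psum u x := by
    have e2 : ∀ n : ℕ, (((n:ℝ)+a) * ((n:ℝ)+b) * u n) * x^n
        = ((n:ℝ) * ((n:ℝ)-1) * u n) * x^n + (a+b+1) * (((n:ℝ) * u n) * x^n)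
          + (a*b) * (u n * x^n) := by
      intro n; ring
    rw [tsum_congr e2, Summable.tsum_add (hsA.add (hsB.mul_left (a+b+1))) (hSu.mul_left (a*b)),
        Summable.tsum_add hsA (hsB.mul_left (a+b+1)), tsum_mul_left, tsum_mul_left, hshift0, hshift2,
        hshift1]
    rfl
  rw [hstep, key2] at key1
  linarith [key1]

-- ============ instance section ============
lemma hc23 : ∀ i : ℕ, (2/3 : ℝ) + i ≠ 0 := fun i => by positivity

lemma hcoef_le_one (a b : ℝ)
    (hmono : ∀ n : ℕ, |((n:ℝ)+a)*((n:ℝ)+b)| ≤ ((n:ℝ)+1)*((n:ℝ)+2/3)) :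
    ∀ n, |hcoef a b (2/3) n| ≤ 1 := by
  intro n
  induction n with
  | zero => simp [hcoef]
  | succ m ih =>
    have hpos : (0:ℝ) < ((m:ℝ)+1) * ((m:ℝ)+2/3) := by positivity
    have hrec := hcoef_rec a b (2/3) hc23 m
    have : hcoef a b (2/3) (m+1) = ((m:ℝ)+a) * ((m:ℝ)+b) * hcoef a b (2/3) m
        / (((m:ℝ)+1) * ((m:ℝ)+2/3)) := by
      field_simp
      linarith [hrec]
    rw [this, abs_div, abs_mul, abs_of_pos hpos]
    rw [div_le_one hpos]
    calc |((m:ℝ)+a)*((m:ℝ)+b)| * |hcoef a b (2/3) m| ≤ (((m:ℝ)+1)*((m:ℝ)+2/3)) * 1 :=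
          mul_le_mul (hmono m) ih (abs_nonneg _) (le_of_lt hpos)
      _ = ((m:ℝ)+1)*((m:ℝ)+2/3) := mul_one _

lemma hmono1 : ∀ n : ℕ, |((n:ℝ)+(-1/4))*((n:ℝ)+(-7/12))| ≤ ((n:ℝ)+1)*((n:ℝ)+2/3) := by
  intro n
  have t0 : (0:ℝ) ≤ (n:ℝ) := Nat.cast_nonneg n
  rw [abs_le]; constructor <;> nlinarith [mul_nonneg t0 t0]

lemma hmono2 : ∀ n : ℕ, |((n:ℝ)+(1/4))*((n:ℝ)+(-1/12))| ≤ ((n:ℝ)+1)*((n:ℝ)+2/3) := by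
  intro n
  have t0 : (0:ℝ) ≤ (n:ℝ) := Nat.cast_nonneg n
  rw [abs_le]; constructor <;> nlinarith [mul_nonneg t0 t0]

noncomputable def cf1 : ℕ → ℝ := hcoef (-1/4) (-7/12) (2/3)
noncomputable def cf2 : ℕ → ℝ := hcoef (1/4) (-1/12) (2/3)

lemma cf1_bd : ∀ n, |cf1 n| ≤ 1 := hcoef_le_one _ _ hmono1
lemma cf2_bd : ∀ n, |cf2 n| ≤ 1 := hcoef_le_one _ _ hmono2

noncomputable def ff : ℝ → ℝ := psum cf1
noncomputable def ff1 : ℝ → ℝ := psum (pder cf1)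
noncomputable def ff2 : ℝ → ℝ := psum (pder (pder cf1))
noncomputable def gg : ℝ → ℝ := psum cf2
noncomputable def gg1 : ℝ → ℝ := psum (pder cf2)
noncomputable def gg2 : ℝ → ℝ := psum (pder (pder cf2))

lemma bd0 {c : ℕ → ℝ} (h : ∀ n, |c n| ≤ 1) : ∀ n, |c n| ≤ 1 * ((n:ℝ)+1)^0 := by
  intro n; simpa using h n

lemma hff {x : ℝ} (hx : |x| < 1) : HasDerivAt ff (ff1 x) x :=
  hasDerivAt_psum (bd0 cf1_bd) hx
lemma hff1 {x : ℝ} (hx : |x| < 1) : HasDerivAt ff1 (ff2 x) x :=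
  hasDerivAt_psum (pder_bound (bd0 cf1_bd)) hx
lemma hgg {x : ℝ} (hx : |x| < 1) : HasDerivAt gg (gg1 x) x :=
  hasDerivAt_psum (bd0 cf2_bd) hx
lemma hgg1 {x : ℝ} (hx : |x| < 1) : HasDerivAt gg1 (gg2 x) x :=
  hasDerivAt_psum (pder_bound (bd0 cf2_bd)) hx

lemma ode_f {x : ℝ} (hx : |x| < 1) :
    x * (1 - x) * ff2 x + (2/3 - (1/6)*x) * ff1 x - (7/48) * ff x = 0 := by
  have h := hcoef_ode (-1/4) (-7/12) (2/3) hc23 cf1_bd hx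
  have e1 : (-1/4 : ℝ) + (-7/12) + 1 = 1/6 := by norm_num
  have e2 : (-1/4 : ℝ) * (-7/12) = 7/48 := by norm_num
  rw [e1, e2] at h
  exact h

lemma ode_g {z : ℝ} (hz : |z| < 1) :
    z * (1 - z) * gg2 z + (2/3 - (7/6)*z) * gg1 z + (1/48) * gg z = 0 := by
  have h := hcoef_ode (1/4) (-1/12) (2/3) hc23 cf2_bd hz
  have e1 : (1/4 : ℝ) + (-1/12) + 1 = 7/6 := by norm_num
  rw [e1] at h
  simp only [gg, gg1, gg2, cf2]
  linarith [h]

/-- tail bound: `|psum c x - c 0| ≤ |x|/(1-|x|)` when `|c n| ≤ 1`. -/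
lemma psum_near {c : ℕ → ℝ} (hb : ∀ n, |c n| ≤ 1) {x : ℝ} (hx : |x| < 1) :
    |psum c x - c 0| ≤ |x| / (1 - |x|) := by
  have hs : Summable (fun n => c n * x^n) := summable_aux hx (bd0 hb)
  have h1 : psum c x - c 0 = ∑' n : ℕ, c (n+1) * x^(n+1) := by
    rw [psum, Summable.tsum_eq_zero_add hs]; simp
  rw [h1]
  have hs2 : Summable (fun n : ℕ => |x|^(n+1)) := by
    apply Summable.comp_injective (f := fun n : ℕ => |x|^n) _ (add_left_injective 1)
    · simpa using summable_geometric_of_lt_one (abs_nonneg x) hx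
  have hs1 : Summable (fun n : ℕ => ‖c (n+1) * x^(n+1)‖) := by
    apply Summable.of_nonneg_of_le (fun n => norm_nonneg _) _ hs2
    intro n
    rw [Real.norm_eq_abs, abs_mul, abs_pow]
    calc |c (n+1)| * |x|^(n+1) ≤ 1 * |x|^(n+1) := by
          apply mul_le_mul_of_nonneg_right (hb (n+1)) (by positivity)
      _ = |x|^(n+1) := one_mul _
  calc |∑' n : ℕ, c (n+1) * x^(n+1)| ≤ ∑' n : ℕ, ‖c (n+1) * x^(n+1)‖ :=
        norm_tsum_le_tsum_norm hs1
    _ ≤ ∑' n : ℕ, |x|^(n+1) := Summable.tsum_le_tsum (fun n => by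
          rw [Real.norm_eq_abs, abs_mul, abs_pow]
          calc |c (n+1)| * |x|^(n+1) ≤ 1 * |x|^(n+1) := by
                apply mul_le_mul_of_nonneg_right (hb (n+1)) (by positivity)
            _ = |x|^(n+1) := one_mul _) hs1 hs2
    _ = |x| * ∑' n : ℕ, |x|^n := by
        rw [← tsum_mul_left]; exact tsum_congr fun n => by ring
    _ = |x| * (1 - |x|)⁻¹ := by rw [tsum_geometric_of_lt_one (abs_nonneg x) hx]
    _ = |x| / (1 - |x|) := by rw [div_eq_mul_inv]

lemma psum_zero (c : ℕ → ℝ) : psum c 0 = c 0 := by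
  rw [psum, tsum_eq_single 0 (by intro n hn; simp [zero_pow hn])]
  simp

lemma cf1_zero : cf1 0 = 1 := by simp [cf1, hcoef]
lemma cf2_zero : cf2 0 = 1 := by simp [cf2, hcoef]

noncomputable section

def UU : ℝ → ℝ := fun x => 1 - 42*x - 7*x^2
def PP : ℝ → ℝ := fun x => x^2 - 42*x - 7
def NZ : ℝ → ℝ := fun x => ((PP x)^3 + 3*x*(PP x)^2*(2*x-42)) * UU x - 3*x*(PP x)^3*(-42-14*x)
def NZp : ℝ → ℝ := fun x =>
  (6*(PP x)^2*(2*x-42) + 6*x*(PP x)*(2*x-42)^2 + 6*x*(PP x)^2) * UU x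
  + ((PP x)^3 + 3*x*(PP x)^2*(2*x-42)) * (-42-14*x)
  - (3*(PP x)^3 + 9*x*(PP x)^2*(2*x-42)) * (-42-14*x) - 3*x*(PP x)^3*(-14)
def Zu : ℝ → ℝ := fun x => x * (PP x)^3 / (UU x)^3
def Zd : ℝ → ℝ := fun x => NZ x / (UU x)^4
def Zdd : ℝ → ℝ := fun x => (NZp x * UU x - 4 * NZ x * (-42-14*x)) / (UU x)^5
def ww : ℝ → ℝ := fun x => (UU x) ^ ((1:ℝ)/4)
def phi : ℝ → ℝ := fun x => ww x * gg (Zu x)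
def phi1 : ℝ → ℝ := fun x =>
  ww x * ((1/4) * (-42-14*x) / UU x * gg (Zu x) + gg1 (Zu x) * Zd x)
def EE : ℝ → ℝ := fun x =>
  ww x * (((1/4)*(-14)/UU x + (-3/16)*(-42-14*x)^2/(UU x)^2) * gg (Zu x)
    + (2*((1/4)*(-42-14*x)/UU x)*Zd x + Zdd x) * gg1 (Zu x)
    + (Zd x)^2 * gg2 (Zu x))
end

lemma HasDerivAt_congr {f g : ℝ → ℝ} {v w : ℝ} {x : ℝ} (h : HasDerivAt f v x)
    (hfg : ∀ y, g y = f y) (hv : w = v) : HasDerivAt g w x := by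
  subst hv
  exact h.congr_of_eventuallyEq (Filter.Eventually.of_forall hfg)

lemma hPP (x : ℝ) : HasDerivAt PP (2*x - 42) x := by
  apply HasDerivAt_congr
    (((hasDerivAt_pow 2 x).sub ((hasDerivAt_id x).const_mul 42)).sub_const 7)
  · intro y; simp [PP]
  · norm_num

lemma hUU (x : ℝ) : HasDerivAt UU (-42 - 14*x) x := by
  apply HasDerivAt_congr
    (((hasDerivAt_const x (1:ℝ)).sub ((hasDerivAt_id x).const_mul 42)).sub
      ((hasDerivAt_pow 2 x).const_mul 7))
  · intro y; simp [UU]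
  · norm_num; ring

lemma hNZ (x : ℝ) : HasDerivAt NZ (NZp x) x := by
  apply HasDerivAt_congr
    (((((hPP x).pow 3).add ((((hasDerivAt_id x).const_mul 3).mul ((hPP x).pow 2)).mul
        (((hasDerivAt_id x).const_mul 2).sub_const 42))).mul (hUU x)).sub
      ((((hasDerivAt_id x).const_mul 3).mul ((hPP x).pow 3)).mul
        (((hasDerivAt_id x).const_mul (-14)).sub_const 42)))
  · intro y; simp only [NZ, id_eq, Pi.mul_apply, Pi.add_apply, Pi.sub_apply, Pi.div_apply, Pi.pow_apply, Function.comp_apply]; ring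
  · simp only [NZp, id_eq]; norm_num; ring

lemma hZu {x : ℝ} (hU0 : UU x ≠ 0) : HasDerivAt Zu (Zd x) x := by
  apply HasDerivAt_congr
    (((hasDerivAt_id x).mul ((hPP x).pow 3)).div ((hUU x).pow 3) (pow_ne_zero 3 hU0))
  · intro y; simp only [Zu, id_eq, Pi.mul_apply, Pi.add_apply, Pi.sub_apply, Pi.div_apply, Pi.pow_apply, Function.comp_apply]
  · simp only [Zd, NZ, id_eq, Pi.mul_apply, Pi.add_apply, Pi.sub_apply, Pi.div_apply, Pi.pow_apply, Function.comp_apply]; field_simp; ring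

lemma hZd {x : ℝ} (hU0 : UU x ≠ 0) : HasDerivAt Zd (Zdd x) x := by
  apply HasDerivAt_congr ((hNZ x).div ((hUU x).pow 4) (pow_ne_zero 4 hU0))
  · intro y; simp only [Zd, id_eq, Pi.mul_apply, Pi.add_apply, Pi.sub_apply, Pi.div_apply, Pi.pow_apply, Function.comp_apply]
  · simp only [Zdd, id_eq, Pi.mul_apply, Pi.add_apply, Pi.sub_apply, Pi.div_apply, Pi.pow_apply, Function.comp_apply]; field_simp; ring

lemma hww {x : ℝ} (hU : 0 < UU x) : HasDerivAt ww ((1/4) * (-42-14*x) * ww x / UU x) x := by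
  apply HasDerivAt_congr ((hUU x).rpow_const (p := (1:ℝ)/4) (Or.inl hU.ne'))
  · intro y; rfl
  · rw [Real.rpow_sub hU, Real.rpow_one]; unfold ww; ring

lemma hphi {x : ℝ} (hU : 0 < UU x) (hZ : |Zu x| < 1) : HasDerivAt phi (phi1 x) x := by
  apply HasDerivAt_congr ((hww hU).mul ((hgg hZ).comp x (hZu hU.ne')))
  · intro y; simp only [phi, Pi.mul_apply, Pi.add_apply, Pi.sub_apply, Pi.div_apply, Pi.pow_apply, Function.comp_apply]
  · simp only [phi1, Pi.mul_apply, Pi.add_apply, Pi.sub_apply, Pi.div_apply, Pi.pow_apply, Function.comp_apply]; field_simp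

lemma hphi1 {x : ℝ} (hU : 0 < UU x) (hZ : |Zu x| < 1) : HasDerivAt phi1 (EE x) x := by
  apply HasDerivAt_congr ((hww hU).mul
    (((((((hasDerivAt_id x).const_mul (-14)).sub_const 42).const_mul (1/4)).div (hUU x) hU.ne').mul
        ((hgg hZ).comp x (hZu hU.ne'))).add
      (((hgg1 hZ).comp x (hZu hU.ne')).mul (hZd hU.ne'))))
  · intro y; simp only [phi1, id_eq, Pi.mul_apply, Pi.add_apply, Pi.sub_apply, Pi.div_apply, Pi.pow_apply, Function.comp_apply]; ring
  · simp only [EE, id_eq, Pi.mul_apply, Pi.add_apply, Pi.sub_apply, Pi.div_apply, Pi.pow_apply, Function.comp_apply]; field_simp; ring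

-- ======== bounds on the interval |x| < 1/1000 ========
lemma bUU {x : ℝ} (hx : |x| < 1/1000) : 9/10 < UU x := by
  obtain ⟨h1, h2⟩ := abs_lt.mp hx
  simp only [UU]; nlinarith

lemma bPP {x : ℝ} (hx : |x| < 1/1000) : |PP x| ≤ 8 := by
  obtain ⟨h1, h2⟩ := abs_lt.mp hx
  rw [abs_le]; constructor <;> (simp only [PP]; nlinarith)

lemma bZu {x : ℝ} (hx : |x| < 1/1000) : |Zu x| < 1 := by
  have hU := bUU hx
  have hP := bPP hx
  have h1 : |x * (PP x)^3| ≤ 512/1000 := by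
    rw [abs_mul, abs_pow]
    calc |x| * |PP x|^3 ≤ (1/1000) * 8^3 := by
          apply mul_le_mul (le_of_lt hx) (pow_le_pow_left₀ (abs_nonneg _) hP 3)
            (by positivity) (by norm_num)
      _ = 512/1000 := by norm_num
  have h2 : (729:ℝ)/1000 < (UU x)^3 := by
    calc (729:ℝ)/1000 = (9/10)^3 := by norm_num
      _ < (UU x)^3 := by
          apply pow_lt_pow_left₀ hU (by norm_num) (by norm_num)
  have h3 : |Zu x| = |x * (PP x)^3| / (UU x)^3 := by
    rw [Zu, abs_div, abs_of_pos (by nlinarith : (0:ℝ) < (UU x)^3)]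
  rw [h3]
  rw [div_lt_one (by nlinarith)]
  linarith

lemma bZu0 {x : ℝ} (hx : |x| < 1/1000) (hx0 : x ≠ 0) : Zu x ≠ 0 := by
  have hU := bUU hx
  obtain ⟨h1, h2⟩ := abs_lt.mp hx
  have hP : PP x < 0 := by simp only [PP]; nlinarith
  simp only [Zu]
  apply div_ne_zero (mul_ne_zero hx0 (pow_ne_zero 3 (ne_of_lt hP))) (by positivity)

-- ======== the two pull-back bracket identities ========
lemma brI {x : ℝ} (hx0 : x ≠ 0) (hU0 : UU x ≠ 0) :
    (x*(1-x)*(2*((1/4)*(-42-14*x)/UU x)*Zd x + Zdd x) + (2/3-(1/6)*x)*Zd x) * (Zu x * (1-Zu x))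
      = x*(1-x)*(Zd x)^2 * (2/3 - (7/6)*Zu x) := by
  simp only [Zu, Zd, Zdd, NZ, NZp, PP] at *
  field_simp
  simp only [UU]
  ring

lemma brII {x : ℝ} (hx0 : x ≠ 0) (hU0 : UU x ≠ 0) :
    (x*(1-x)*((1/4)*(-14)/UU x + (-3/16)*(-42-14*x)^2/(UU x)^2)
        + (2/3-(1/6)*x)*((1/4)*(-42-14*x)/UU x) - 7/48) * (Zu x * (1-Zu x))
      = x*(1-x)*(Zd x)^2 * (1/48) := by
  simp only [Zu, Zd, Zdd, NZ, NZp, PP] at *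
  field_simp
  simp only [UU]
  ring

-- ======== the ODE satisfied by phi ========
lemma ode_phi {x : ℝ} (hx0 : x ≠ 0) (hx : |x| < 1/1000) :
    x * (1 - x) * EE x + (2/3 - (1/6)*x) * phi1 x - (7/48) * phi x = 0 := by
  have hU : 0 < UU x := lt_trans (by norm_num) (bUU hx)
  have hZb : |Zu x| < 1 := bZu hx
  have hZ0 : Zu x ≠ 0 := bZu0 hx hx0
  have hZ1 : (1:ℝ) - Zu x ≠ 0 := by
    have := (abs_lt.mp hZb).2; intro h; linarith [h]
  have hzz : Zu x * (1 - Zu x) ≠ 0 := mul_ne_zero hZ0 hZ1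
  have hODE := ode_g hZb
  have hbrI := brI hx0 hU.ne'
  have hbrII := brII hx0 hU.ne'
  have key : (Zu x * (1 - Zu x)) *
      (x * (1 - x) * EE x + (2/3 - (1/6)*x) * phi1 x - (7/48) * phi x) = 0 := by
    simp only [EE, phi1, phi]
    linear_combination (ww x * gg (Zu x)) * hbrII + (ww x * gg1 (Zu x)) * hbrI
      + (ww x * (x*(1-x)) * (Zd x)^2) * hODE
  exact (mul_eq_zero.mp key).resolve_left hzz


lemma ff_half {x : ℝ} (hx : |x| < 1/1000) : 1/2 < ff x := by
  have hx1 : |x| < 1 := lt_trans hx (by norm_num)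
  have h := psum_near cf1_bd hx1
  rw [cf1_zero] at h
  have hpos : (0:ℝ) < 1 - |x| := by linarith
  have h1 : |x| / (1 - |x|) < 1/2 := by
    rw [div_lt_iff₀ hpos]
    have := abs_nonneg x
    linarith
  have h2 := (abs_le.mp h).1
  have : ff x = psum cf1 x := rfl
  linarith [h2]

lemma ff_zero : ff 0 = 1 := by
  show psum cf1 0 = 1
  rw [psum_zero, cf1_zero]

lemma phi_zero : phi 0 = 1 := by
  have hZ : Zu 0 = 0 := by simp [Zu]
  have hU : UU 0 = 1 := by norm_num [UU]
  have hg0 : gg 0 = 1 := by show psum cf2 0 = 1; rw [psum_zero, cf2_zero]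
  simp only [phi, ww, hZ, hU, Real.one_rpow, hg0, mul_one]

-- ===================== part 3 =====================
lemma const_of_deriv_zero {s : Set ℝ} (hconv : Convex ℝ s) (hopen : IsOpen s) {V : ℝ → ℝ}
    (h : ∀ y ∈ s, HasDerivAt V 0 y) {a b : ℝ} (ha : a ∈ s) (hb : b ∈ s) : V a = V b := by
  apply hconv.is_const_of_fderivWithin_eq_zero
    (fun y hy => (h y hy).differentiableAt.differentiableWithinAt) _ ha hb
  intro y hy
  rw [fderivWithin_of_isOpen hopen hy, (h y hy).hasFDerivAt.fderiv]
  ext z; simp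

noncomputable def WW : ℝ → ℝ := fun y => ff y * phi1 y - ff1 y * phi y

lemma hWW {y : ℝ} (hy : |y| < 1/1000) :
    HasDerivAt WW (ff y * EE y - ff2 y * phi y) y := by
  have hy1 : |y| < 1 := lt_trans hy (by norm_num)
  have hU : 0 < UU y := lt_trans (by norm_num) (bUU hy)
  have hZ := bZu hy
  apply HasDerivAt_congr (((hff hy1).mul (hphi1 hU hZ)).sub (((hff1 hy1)).mul (hphi hU hZ)))
  · intro z; rfl
  · ring

lemma hWode {y : ℝ} (hy0 : y ≠ 0) (hy : |y| < 1/1000) :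
    y * (1-y) * (ff y * EE y - ff2 y * phi y) + (2/3 - (1/6)*y) * WW y = 0 := by
  have hy1 : |y| < 1 := lt_trans hy (by norm_num)
  have hop := ode_phi hy0 hy
  have hof := ode_f hy1
  simp only [WW]
  linear_combination (ff y) * hop - (phi y) * hof

/-- main side lemma: `phi = ff` on one side of `0`. -/
lemma side_eq (σ : ℝ) (hσ : σ = 1 ∨ σ = -1) {x : ℝ}
    (hxs : 0 < σ * x ∧ |x| < 1/1000) : phi x = ff x := by
  have hσ2 : σ * σ = 1 := by rcases hσ with h|h <;> (subst h; norm_num)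
  have hσ0 : σ ≠ 0 := by rcases hσ with h|h <;> (subst h; norm_num)
  set s : Set ℝ := {y : ℝ | 0 < σ * y ∧ |y| < 1/1000} with hs
  have hsopen : IsOpen s := by
    have h1 : IsOpen {y : ℝ | 0 < σ * y} := isOpen_lt continuous_const (continuous_const.mul continuous_id)
    have h2 : IsOpen {y : ℝ | |y| < 1/1000} := isOpen_lt continuous_abs continuous_const
    exact h1.inter h2
  have hseq : s = Ioo 0 (1/1000) ∨ s = Ioo (-(1/1000)) 0 := by
    rcases hσ with h|h <;> subst h
    · left; ext y; simp only [hs, mem_setOf_eq, mem_Ioo, one_mul, abs_lt]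
      constructor
      · rintro ⟨h1, h2, h3⟩; exact ⟨h1, h3⟩
      · rintro ⟨h1, h2⟩; exact ⟨h1, by linarith, h2⟩
    · right; ext y; simp only [hs, mem_setOf_eq, mem_Ioo, neg_mul, one_mul, abs_lt]
      constructor
      · rintro ⟨h1, h2, h3⟩; exact ⟨h2, by linarith⟩
      · rintro ⟨h1, h2⟩; exact ⟨by linarith, h1, by linarith⟩
  have hsconv : Convex ℝ s := by rcases hseq with h|h <;> (rw [h]; exact convex_Ioo _ _)
  have hne : (𝓝[s] (0:ℝ)).NeBot := by
    rw [← mem_closure_iff_nhdsWithin_neBot]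
    rcases hseq with h|h <;> rw [h, closure_Ioo (by norm_num)]
    · exact ⟨le_refl 0, by norm_num⟩
    · exact ⟨by norm_num, le_refl 0⟩
  -- basic facts for y ∈ s
  have hmem : ∀ y ∈ s, 0 < σ * y ∧ y ≠ 0 ∧ |y| < 1/1000 ∧ (0:ℝ) < 1 - y := by
    intro y hy
    obtain ⟨h1, h2⟩ := hy
    have hy0 : y ≠ 0 := by intro h; rw [h, mul_zero] at h1; exact lt_irrefl 0 h1
    have := (abs_lt.mp h2).2
    exact ⟨h1, hy0, h2, by linarith⟩
  -- the function V
  set V : ℝ → ℝ := fun y => WW y * ((σ*y) ^ ((2:ℝ)/3)) * ((1-y) ^ (-(1:ℝ)/2)) with hV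
  have hVderiv : ∀ y ∈ s, HasDerivAt V 0 y := by
    intro y hy
    obtain ⟨hσy, hy0, hylt, h1y⟩ := hmem y hy
    have hA : HasDerivAt (fun z : ℝ => (σ*z) ^ ((2:ℝ)/3)) ((2/3) * (σ*y)^((2:ℝ)/3) / y) y := by
      apply HasDerivAt_congr (((hasDerivAt_id y).const_mul σ).rpow_const (Or.inl hσy.ne'))
      · intro z; rfl
      · simp only [id_eq]
        rw [Real.rpow_sub hσy, Real.rpow_one]
        field_simp
    have hB : HasDerivAt (fun z : ℝ => (1-z) ^ (-(1:ℝ)/2))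
        ((1/2) * ((1-y) ^ (-(1:ℝ)/2)) / (1-y)) y := by
      apply HasDerivAt_congr
        (((hasDerivAt_const y (1:ℝ)).sub (hasDerivAt_id y)).rpow_const (Or.inl h1y.ne'))
      · intro z; rfl
      · simp only [id_eq, Pi.sub_apply]
        rw [Real.rpow_sub h1y, Real.rpow_one]
        field_simp
        norm_num
    apply HasDerivAt_congr (((hWW hylt).mul hA).mul hB)
    · intro z; rfl
    · have hode := hWode hy0 hylt
      have hyy : y * (1-y) ≠ 0 := mul_ne_zero hy0 h1y.ne'
      set A := (σ*y) ^ ((2:ℝ)/3) with hA'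
      set B := (1-y) ^ (-(1:ℝ)/2) with hB'
      set Wd := ff y * EE y - ff2 y * phi y with hWd
      have h2 : (((Wd * A + WW y * (2/3 * A / y)) * B + WW y * A * (1/2 * B / (1-y))))
          * (y * (1-y))
          = (A * B) * (y * (1-y) * Wd + (2/3 - (1/6)*y) * WW y) := by
        field_simp
        ring
      rw [hode, mul_zero] at h2
      have h3 := (mul_eq_zero.mp h2).resolve_right hyy
      exact h3.symm
  -- V tends to 0 at 0 within s
  have hWcont : ContinuousAt WW 0 := (hWW (by norm_num)).continuousAt
  have hAcont : ContinuousAt (fun z : ℝ => (σ*z) ^ ((2:ℝ)/3)) 0 := by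
    have h2 : ContinuousAt (fun t : ℝ => t ^ ((2:ℝ)/3)) ((fun z : ℝ => σ*z) 0) := by
      simpa using Real.continuousAt_rpow_const 0 ((2:ℝ)/3) (Or.inr (by norm_num))
    exact h2.comp ((continuous_const.mul continuous_id).continuousAt)
  have hVlim : Tendsto V (𝓝[s] 0) (𝓝 0) := by
    have hcont : ContinuousAt V 0 := by
      apply ContinuousAt.mul
      apply ContinuousAt.mul hWcont hAcont
      have h2 : ContinuousAt (fun t : ℝ => t ^ (-(1:ℝ)/2)) ((fun z : ℝ => 1 - z) 0) := by
        simpa using Real.continuousAt_rpow_const 1 (-(1:ℝ)/2) (Or.inl one_ne_zero)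
      exact h2.comp ((continuous_const.sub continuous_id).continuousAt)
    have hV0 : V 0 = 0 := by
      simp only [hV, mul_zero, Real.zero_rpow (by norm_num : ((2:ℝ)/3) ≠ 0)]
      ring
    have := (hcont.continuousWithinAt (s := s)).tendsto
    rwa [hV0] at this
  -- V vanishes on s, hence W vanishes on s
  have hW0 : ∀ y ∈ s, WW y = 0 := by
    intro y hy
    obtain ⟨hσy, hy0, hylt, h1y⟩ := hmem y hy
    have hconst : ∀ z ∈ s, V z = V y := fun z hz => const_of_deriv_zero hsconv hsopen hVderiv hz hy
    have hlim2 : Tendsto V (𝓝[s] 0) (𝓝 (V y)) := by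
      apply Tendsto.congr' _ (tendsto_const_nhds (α := ℝ))
      filter_upwards [self_mem_nhdsWithin] with z hz
      exact (hconst z hz).symm
    have hVy0 : V y = 0 := tendsto_nhds_unique hlim2 hVlim
    have hApos : 0 < (σ*y) ^ ((2:ℝ)/3) := Real.rpow_pos_of_pos hσy _
    have hBpos : 0 < (1-y) ^ (-(1:ℝ)/2) := Real.rpow_pos_of_pos h1y _
    have := hVy0
    simp only [hV] at this
    rcases mul_eq_zero.mp this with h|h
    · rcases mul_eq_zero.mp h with h'|h'
      · exact h'
      · exact absurd h' hApos.ne'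
    · exact absurd h hBpos.ne'
  -- the ratio phi/ff is constant = 1 on s
  set R : ℝ → ℝ := fun y => phi y / ff y with hR
  have hRderiv : ∀ y ∈ s, HasDerivAt R 0 y := by
    intro y hy
    obtain ⟨hσy, hy0, hylt, h1y⟩ := hmem y hy
    have hy1 : |y| < 1 := lt_trans hylt (by norm_num)
    have hU : 0 < UU y := lt_trans (by norm_num) (bUU hylt)
    have hfne : ff y ≠ 0 := by linarith [ff_half hylt]
    apply HasDerivAt_congr ((hphi hU (bZu hylt)).div (hff hy1) hfne)
    · intro z; rfl
    · have := hW0 y hy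
      simp only [WW] at this
      rw [eq_comm, div_eq_zero_iff]
      left
      linear_combination this
  have hRlim : Tendsto R (𝓝[s] 0) (𝓝 1) := by
    have hU0 : (0:ℝ) < UU 0 := lt_trans (by norm_num) (bUU (by norm_num))
    have hcont : ContinuousAt R 0 := by
      apply ContinuousAt.div (hphi hU0 (bZu (by norm_num))).continuousAt
        (hff (by norm_num)).continuousAt
      rw [ff_zero]; norm_num
    have h0 : R 0 = 1 := by rw [hR]; simp [phi_zero, ff_zero]
    have := (hcont.continuousWithinAt (s := s)).tendsto
    rwa [h0] at this
  have hxmem : x ∈ s := hxs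
  have hconst : ∀ z ∈ s, R z = R x := fun z hz => const_of_deriv_zero hsconv hsopen hRderiv hz hxmem
  have hlim2 : Tendsto R (𝓝[s] 0) (𝓝 (R x)) := by
    apply Tendsto.congr' _ (tendsto_const_nhds (α := ℝ))
    filter_upwards [self_mem_nhdsWithin] with z hz
    exact (hconst z hz).symm
  have hR1 : R x = 1 := tendsto_nhds_unique hlim2 hRlim
  have hfne : ff x ≠ 0 := by linarith [ff_half hxs.2]
  have := hR1
  rw [hR] at this
  field_simp at this
  exact this


theorem stmt18 : ∃ ε > 0, ∀ X : ℝ, |X| < ε →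
    hypgeo (-1/4) (-7/12) (2/3) X =
      (1 - 42*X - 7*X^2) ^ ((1 : ℝ)/4) *
        hypgeo (1/4) (-1/12) (2/3) (-(X * (X^2 - 42*X - 7)^3) / (7*X^2 + 42*X - 1)^3) := by
  refine ⟨1/1000, by norm_num, ?_⟩
  intro X hX
  have hU : 0 < UU X := lt_trans (by norm_num) (bUU hX)
  have h7 : (7*X^2 + 42*X - 1 : ℝ) = -(UU X) := by simp only [UU]; ring
  have hq : -(X * (X^2 - 42*X - 7)^3) / (7*X^2 + 42*X - 1)^3 = Zu X := by
    rw [h7, show (-(UU X))^3 = -((UU X)^3) by ring, div_neg, neg_div, neg_neg]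
    simp only [Zu, PP]
  have hL : hypgeo (-1/4) (-7/12) (2/3) X = ff X := rfl
  have hR : (1 - 42*X - 7*X^2 : ℝ) ^ ((1 : ℝ)/4) *
      hypgeo (1/4) (-1/12) (2/3) (-(X * (X^2 - 42*X - 7)^3) / (7*X^2 + 42*X - 1)^3)
      = phi X := by
    rw [hq]; rfl
  rw [hL, hR]
  rcases lt_trichotomy X 0 with h|h|h
  · exact (side_eq (-1) (Or.inr rfl) ⟨by linarith [neg_mul (1:ℝ) X], hX⟩).symm
  · subst h; rw [ff_zero, phi_zero]
  · exact (side_eq 1 (Or.inl rfl) ⟨by linarith, hX⟩).symm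
end

section
/- The real Gamma function satisfies Γ(2/3)·Γ(13/12) / (Γ(4/3)·Γ(5/12)) = (√3 + 1)/4 and Γ(2/3)·Γ(7/12) / (4·Γ(4/3)·Γ(11/12)) = 3(√3 - 1)/4. -/
open Real

theorem stmt19 :
    Real.Gamma (2/3) * Real.Gamma (13/12) / (Real.Gamma (4/3) * Real.Gamma (5/12)) =
      (Real.sqrt 3 + 1) / 4 ∧
    Real.Gamma (2/3) * Real.Gamma (7/12) / (4 * Real.Gamma (4/3) * Real.Gamma (11/12)) =
      3 * (Real.sqrt 3 - 1) / 4 := by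
  have hpi : (0:ℝ) < π := pi_pos
  have hsqpi : Real.sqrt π * Real.sqrt π = π := Real.mul_self_sqrt hpi.le
  have hs2 : Real.sqrt 2 * Real.sqrt 2 = 2 := Real.mul_self_sqrt (by norm_num)
  have hs3 : Real.sqrt 3 * Real.sqrt 3 = 3 := Real.mul_self_sqrt (by norm_num)
  -- sin value
  have hsin : Real.sin (π * (5/12)) = Real.sqrt 2 * (Real.sqrt 3 + 1) / 4 := by
    rw [show π * (5/12) = π/4 + π/6 by ring, Real.sin_add, Real.sin_pi_div_four,
      Real.cos_pi_div_four, Real.sin_pi_div_six, Real.cos_pi_div_six]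
    ring
  -- rpow numerics
  have hr1 : (2:ℝ) ^ ((5:ℝ)/6) * (2:ℝ) ^ ((2:ℝ)/3) = 2 * Real.sqrt 2 := by
    rw [← Real.rpow_add two_pos, show (5:ℝ)/6 + 2/3 = 1 + 1/2 by norm_num,
      Real.rpow_add two_pos, Real.rpow_one, ← Real.sqrt_eq_rpow]
  have hr2 : (2:ℝ) ^ ((1:ℝ)/6) * (2:ℝ) ^ ((1:ℝ)/3) = Real.sqrt 2 := by
    rw [← Real.rpow_add two_pos, show (1:ℝ)/6 + 1/3 = 1/2 by norm_num, ← Real.sqrt_eq_rpow]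
  -- Gamma facts
  have g13 : 0 < Real.Gamma (1/3) := Real.Gamma_pos_of_pos (by norm_num)
  have g23 : 0 < Real.Gamma (2/3) := Real.Gamma_pos_of_pos (by norm_num)
  have g512 : 0 < Real.Gamma (5/12) := Real.Gamma_pos_of_pos (by norm_num)
  have g712 : 0 < Real.Gamma (7/12) := Real.Gamma_pos_of_pos (by norm_num)
  have g1112 : 0 < Real.Gamma (11/12) := Real.Gamma_pos_of_pos (by norm_num)
  have h1 : Real.Gamma (13/12) = (1/12) * Real.Gamma (1/12) := by
    rw [show (13:ℝ)/12 = 1/12 + 1 by norm_num, Real.Gamma_add_one (by norm_num)]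
  have h2 : Real.Gamma (4/3) = (1/3) * Real.Gamma (1/3) := by
    rw [show (4:ℝ)/3 = 1/3 + 1 by norm_num, Real.Gamma_add_one (by norm_num)]
  have hrefl : Real.Gamma (5/12) * Real.Gamma (7/12) = π / Real.sin (π * (5/12)) := by
    have := Real.Gamma_mul_Gamma_one_sub (5/12)
    rwa [show (1:ℝ) - 5/12 = 7/12 by norm_num] at this
  have hsinpos : (0:ℝ) < Real.sin (π * (5/12)) := by
    rw [hsin]; positivity
  have hrefl' : Real.sin (π * (5/12)) * (Real.Gamma (5/12) * Real.Gamma (7/12)) = π := by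
    rw [hrefl, mul_comm]; exact div_mul_cancel₀ _ hsinpos.ne'
  have dupA : Real.Gamma (1/12) * Real.Gamma (7/12)
      = Real.Gamma (1/6) * (2:ℝ) ^ ((5:ℝ)/6) * Real.sqrt π := by
    have := Real.Gamma_mul_Gamma_add_half (1/12)
    norm_num at this
    convert this using 3 <;> norm_num
  have dupD : Real.Gamma (5/12) * Real.Gamma (11/12)
      = Real.Gamma (5/6) * (2:ℝ) ^ ((1:ℝ)/6) * Real.sqrt π := by
    have := Real.Gamma_mul_Gamma_add_half (5/12)
    norm_num at this
    convert this using 3 <;> norm_num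
  have dupC : Real.Gamma (1/6) * Real.Gamma (2/3)
      = Real.Gamma (1/3) * (2:ℝ) ^ ((2:ℝ)/3) * Real.sqrt π := by
    have := Real.Gamma_mul_Gamma_add_half (1/6)
    norm_num at this
    convert this using 3 <;> norm_num
  have dupE : Real.Gamma (1/3) * Real.Gamma (5/6)
      = Real.Gamma (2/3) * (2:ℝ) ^ ((1:ℝ)/3) * Real.sqrt π := by
    have := Real.Gamma_mul_Gamma_add_half (1/3)
    norm_num at this
    convert this using 3 <;> norm_num
  -- numeric combination facts
  have N1 : Real.sin (π * (5/12)) * ((2:ℝ) ^ ((5:ℝ)/6)) * ((2:ℝ) ^ ((2:ℝ)/3)) * (Real.sqrt π * Real.sqrt π)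
      = (Real.sqrt 3 + 1) * π := by
    rw [hsqpi, mul_assoc (Real.sin _), hr1, hsin]
    have : Real.sqrt 2 * (Real.sqrt 3 + 1) / 4 * (2 * Real.sqrt 2) = Real.sqrt 3 + 1 := by
      linear_combination (Real.sqrt 3 + 1) / 2 * hs2
    linear_combination π * this
  have N2 : Real.sin (π * (5/12)) * ((2:ℝ) ^ ((1:ℝ)/6)) * ((2:ℝ) ^ ((1:ℝ)/3)) * (Real.sqrt π * Real.sqrt π)
      = (Real.sqrt 3 + 1) / 2 * π := by
    rw [hsqpi, mul_assoc (Real.sin _), hr2, hsin]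
    have : Real.sqrt 2 * (Real.sqrt 3 + 1) / 4 * Real.sqrt 2 = (Real.sqrt 3 + 1) / 2 := by
      linear_combination (Real.sqrt 3 + 1) / 4 * hs2
    linear_combination π * this
  -- key identities
  have K1 : π * (Real.Gamma (2/3) * Real.Gamma (1/12))
      = π * ((Real.sqrt 3 + 1) * (Real.Gamma (1/3) * Real.Gamma (5/12))) := by
    linear_combination (-(Real.Gamma (2/3) * Real.Gamma (1/12))) * hrefl'
      + (Real.sin (π * (5/12)) * Real.Gamma (5/12) * Real.Gamma (2/3)) * dupA
      + (Real.sin (π * (5/12)) * Real.Gamma (5/12) * (2:ℝ) ^ ((5:ℝ)/6) * Real.sqrt π) * dupC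
      + (Real.Gamma (1/3) * Real.Gamma (5/12)) * N1
  have M : π * (Real.Gamma (1/3) * Real.Gamma (11/12))
      = (Real.sqrt 3 + 1) / 2 * (π * (Real.Gamma (2/3) * Real.Gamma (7/12))) := by
    linear_combination (-(Real.Gamma (1/3) * Real.Gamma (11/12))) * hrefl'
      + (Real.sin (π * (5/12)) * Real.Gamma (7/12) * Real.Gamma (1/3)) * dupD
      + (Real.sin (π * (5/12)) * Real.Gamma (7/12) * (2:ℝ) ^ ((1:ℝ)/6) * Real.sqrt π) * dupE
      + (Real.Gamma (2/3) * Real.Gamma (7/12)) * N2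
  have K2 : π * (Real.Gamma (2/3) * Real.Gamma (7/12))
      = π * ((Real.sqrt 3 - 1) * (Real.Gamma (1/3) * Real.Gamma (11/12))) := by
    linear_combination (-(Real.sqrt 3 - 1)) * M
      - (π * (Real.Gamma (2/3) * Real.Gamma (7/12)) / 2) * hs3
  have K1' := mul_left_cancel₀ hpi.ne' K1
  have K2' := mul_left_cancel₀ hpi.ne' K2
  constructor
  · rw [h1, h2, div_eq_iff (by positivity)]
    linear_combination (1/12) * K1'
  · rw [h2, div_eq_iff (by positivity)]
    linear_combination K2'
end
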